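/- arXiv:0805.1077 — 3 statements merged into one kernel-verified Lean document; each statement's English description precedes it below -/
import Mathlib

section
/- Let A be an admissible pseudo-Hermitian n×n matrix with eigenvalues λ_p ≥ … ≥ λ_1 > μ_1 ≥ … ≥ μ_q. Then λ_1 = min_{x ∈ ℂⁿ₊} R_A(x); precisely: for every x ∈ ℂⁿ₊ one has R_A(x) ≥ λ_1, and there exists x ∈ ℂⁿ₊ with R_A(x) = λ_1. -/
open Matrix

/-- The signature matrix `J = diag(1,…,1,−1,…,−1)` with `p` ones and `q` minus-ones. -/
noncomputable def Jmat (p q : ℕ) : Matrix (Fin (p + q)) (Fin (p + q)) ℂ :=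
  Matrix.diagonal (fun i => if (i : ℕ) < p then 1 else -1)

/-- The indefinite pairing `⟨z,w⟩ = Σ_{i<p} z_i conj(w_i) − Σ_{i≥p} z_i conj(w_i)`;
equivalently `w† · z` where `x† = (J conj(x))ᵀ`. -/
noncomputable def pairing (p q : ℕ) (z w : Fin (p + q) → ℂ) : ℂ :=
  ∑ i : Fin (p + q),
    (if (i : ℕ) < p then z i * (starRingEnd ℂ) (w i) else -(z i * (starRingEnd ℂ) (w i)))

/-- The diagonal entries of `Λ = diag(λ_p, …, λ_1, μ_1, …, μ_q)`, where `lam` and `mu`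
are 0-indexed: `lam i = λ_{i+1}` and `mu j = μ_{j+1}`. -/
noncomputable def diagEntries (p q : ℕ) (lam : Fin p → ℝ) (mu : Fin q → ℝ) :
    Fin (p + q) → ℂ :=
  fun i =>
    if h : (i : ℕ) < p then ((lam ⟨p - 1 - (i : ℕ), by omega⟩ : ℝ) : ℂ)
    else ((mu ⟨(i : ℕ) - p, by have := i.isLt; omega⟩ : ℝ) : ℂ)

/-- `A` is an admissible pseudo-Hermitian matrix with (real) eigenvalues
`λ_p ≥ … ≥ λ_1 > μ_1 ≥ … ≥ μ_q`, recorded 0-indexed as `lam i = λ_{i+1}` (so `lam` is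
monotone) and `mu j = μ_{j+1}` (so `mu` is antitone), with `λ_1 > μ_1`, and
`A = U Λ U⁻¹` for some invertible `U` with `U J Uᴴ = J`. -/
def IsAdmissible (p q : ℕ) (hp : 0 < p) (hq : 0 < q)
    (A : Matrix (Fin (p + q)) (Fin (p + q)) ℂ)
    (lam : Fin p → ℝ) (mu : Fin q → ℝ) : Prop :=
  A * Jmat p q = Jmat p q * A.conjTranspose ∧
  Monotone lam ∧ Antitone mu ∧ mu ⟨0, hq⟩ < lam ⟨0, hp⟩ ∧
  ∃ U : Matrix (Fin (p + q)) (Fin (p + q)) ℂ,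
    IsUnit U ∧ U * Jmat p q * U.conjTranspose = Jmat p q ∧
    A = U * Matrix.diagonal (diagEntries p q lam mu) * U⁻¹

/-- The Rayleigh ratio `R_A(x) = (x† A x)/(x† x)`, as a real number (for admissible
pseudo-Hermitian `A` both `x† A x` and `x† x` are real). -/
noncomputable def rayleigh (p q : ℕ) (A : Matrix (Fin (p + q)) (Fin (p + q)) ℂ)
    (x : Fin (p + q) → ℂ) : ℝ :=
  (pairing p q (A.mulVec x) x).re / (pairing p q x x).re

/-- The pairing written as a dot product against `J`. -/
lemma pairing_eq_dot (p q : ℕ) (z w : Fin (p + q) → ℂ) :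
    pairing p q z w = star w ⬝ᵥ (Jmat p q).mulVec z := by
  unfold pairing Jmat
  simp only [dotProduct, Matrix.mulVec_diagonal, Pi.star_apply]
  refine Finset.sum_congr rfl fun i _ => ?_
  split <;> simp [Complex.star_def] <;> ring

/-- `J`-unitary matrices preserve the pairing. -/
lemma pairing_mulVec (p q : ℕ) (U : Matrix (Fin (p+q)) (Fin (p+q)) ℂ)
    (hU : Uᴴ * Jmat p q * U = Jmat p q) (z w : Fin (p + q) → ℂ) :
    pairing p q (U.mulVec z) (U.mulVec w) = pairing p q z w := by
  rw [pairing_eq_dot, pairing_eq_dot, star_mulVec, Matrix.mulVec_mulVec,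
      Matrix.dotProduct_mulVec, Matrix.vecMul_vecMul, ← Matrix.mul_assoc, hU,
      ← Matrix.dotProduct_mulVec]

lemma pairing_re_diag (p q : ℕ) (d : Fin (p+q) → ℝ) (y : Fin (p+q) → ℂ) :
    (pairing p q ((Matrix.diagonal (fun i => (d i : ℂ))).mulVec y) y).re
      = ∑ i : Fin (p+q), (if (i:ℕ) < p then d i * Complex.normSq (y i)
              else -(d i * Complex.normSq (y i))) := by
  unfold pairing
  rw [Complex.re_sum]
  refine Finset.sum_congr rfl fun i _ => ?_
  rw [Matrix.mulVec_diagonal]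
  split <;> rw [mul_assoc, Complex.mul_conj] <;>
    simp [← Complex.ofReal_mul]

lemma pairing_self_re (p q : ℕ) (y : Fin (p+q) → ℂ) :
    (pairing p q y y).re
      = ∑ i : Fin (p+q), (if (i:ℕ) < p then Complex.normSq (y i)
              else -(Complex.normSq (y i))) := by
  unfold pairing
  rw [Complex.re_sum]
  refine Finset.sum_congr rfl fun i _ => ?_
  split <;> simp [Complex.mul_conj]

/-- Real version of the diagonal entries. -/
noncomputable def dre (p q : ℕ) (lam : Fin p → ℝ) (mu : Fin q → ℝ) : Fin (p + q) → ℝ :=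
  fun i =>
    if h : (i : ℕ) < p then lam ⟨p - 1 - (i : ℕ), by omega⟩
    else mu ⟨(i : ℕ) - p, by have := i.isLt; omega⟩

lemma diagEntries_eq (p q : ℕ) (lam : Fin p → ℝ) (mu : Fin q → ℝ) :
    diagEntries p q lam mu = fun i => ((dre p q lam mu i : ℝ) : ℂ) := by
  funext i
  by_cases h : (i : ℕ) < p <;> simp [diagEntries, dre, h]

/-- for admissible pseudo-Hermitian `A`,
`λ_1 = min_{x ∈ ℂⁿ₊} R_A(x)`. -/
theorem lambda_one_is_min_of_rayleigh_on_pos_cone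
    (p q : ℕ) (hp : 0 < p) (hq : 0 < q)
    (A : Matrix (Fin (p + q)) (Fin (p + q)) ℂ)
    (lam : Fin p → ℝ) (mu : Fin q → ℝ)
    (hA : IsAdmissible p q hp hq A lam mu) :
    (∀ x : Fin (p + q) → ℂ, 0 < (pairing p q x x).re →
        lam ⟨0, hp⟩ ≤ rayleigh p q A x) ∧
    (∃ x : Fin (p + q) → ℂ, 0 < (pairing p q x x).re ∧
        rayleigh p q A x = lam ⟨0, hp⟩) := by
  obtain ⟨hAJ, hlam, hmu, hlm, U, hUunit, hUJ, hAU⟩ := hA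
  have hdet : IsUnit U.det := (Matrix.isUnit_iff_isUnit_det U).mp hUunit
  have hJJ : Jmat p q * Jmat p q = 1 := by
    unfold Jmat
    rw [Matrix.diagonal_mul_diagonal]
    have : (fun i : Fin (p+q) => (if (i:ℕ) < p then (1:ℂ) else -1) *
        (if (i:ℕ) < p then (1:ℂ) else -1)) = fun _ => 1 := by
      funext i; by_cases h : (i:ℕ) < p <;> simp [h]
    rw [this, Matrix.diagonal_one]
  have h1 : U * (Jmat p q * Uᴴ * Jmat p q) = 1 := by
    have : U * (Jmat p q * Uᴴ * Jmat p q) = (U * Jmat p q * Uᴴ) * Jmat p q := by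
      noncomm_ring
    rw [this, hUJ, hJJ]
  have hUinv : U⁻¹ = Jmat p q * Uᴴ * Jmat p q := Matrix.inv_eq_right_inv h1
  have hUH : Uᴴ = Jmat p q * U⁻¹ * Jmat p q := by
    rw [hUinv]
    have : Jmat p q * (Jmat p q * Uᴴ * Jmat p q) * Jmat p q
        = (Jmat p q * Jmat p q) * Uᴴ * (Jmat p q * Jmat p q) := by noncomm_ring
    rw [this, hJJ, Matrix.one_mul, Matrix.mul_one]
  have hU' : Uᴴ * Jmat p q * U = Jmat p q := by
    rw [hUH]
    have : Jmat p q * U⁻¹ * Jmat p q * Jmat p q * U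
        = Jmat p q * (U⁻¹ * ((Jmat p q * Jmat p q) * U)) := by noncomm_ring
    rw [this, hJJ, Matrix.one_mul, Matrix.nonsing_inv_mul U hdet, Matrix.mul_one]
  have hpair := pairing_mulVec p q U hU'
  set D : Matrix (Fin (p+q)) (Fin (p+q)) ℂ :=
    Matrix.diagonal (fun i => ((dre p q lam mu i : ℝ) : ℂ)) with hD
  have hAD : A = U * D * U⁻¹ := by rw [hAU, hD, diagEntries_eq]
  -- key identities for any x
  have key : ∀ x : Fin (p+q) → ℂ,
      pairing p q x x = pairing p q (U⁻¹.mulVec x) (U⁻¹.mulVec x) ∧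
      pairing p q (A.mulVec x) x
        = pairing p q (D.mulVec (U⁻¹.mulVec x)) (U⁻¹.mulVec x) := by
    intro x
    have hxy : x = U.mulVec (U⁻¹.mulVec x) := by
      rw [Matrix.mulVec_mulVec, Matrix.mul_nonsing_inv U hdet, Matrix.one_mulVec]
    constructor
    · rw [← hpair (U⁻¹.mulVec x) (U⁻¹.mulVec x), ← hxy]
    · have hAx : A.mulVec x = U.mulVec (D.mulVec (U⁻¹.mulVec x)) := by
        rw [hAD, Matrix.mulVec_mulVec, Matrix.mulVec_mulVec, Matrix.mul_assoc]
      rw [← hpair (D.mulVec (U⁻¹.mulVec x)) (U⁻¹.mulVec x), ← hxy, ← hAx]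
    -- termwise inequality helper
  have hterm : ∀ y : Fin (p+q) → ℂ,
      lam ⟨0, hp⟩ * (pairing p q y y).re ≤ (pairing p q (D.mulVec y) y).re := by
    intro y
    rw [pairing_self_re, pairing_re_diag, Finset.mul_sum]
    refine Finset.sum_le_sum fun i _ => ?_
    by_cases h : (i : ℕ) < p
    · simp only [h, if_true]
      have hd : lam ⟨0, hp⟩ ≤ dre p q lam mu i := by
        simp only [dre, dif_pos h]
        exact hlam (by simp [Fin.le_def])
      exact mul_le_mul_of_nonneg_right hd (Complex.normSq_nonneg _)
    · simp only [h, if_false, mul_neg, neg_le_neg_iff]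
      have hd : dre p q lam mu i ≤ lam ⟨0, hp⟩ := by
        simp only [dre, dif_neg h]
        exact le_of_lt (lt_of_le_of_lt (hmu (by simp [Fin.le_def])) hlm)
      exact mul_le_mul_of_nonneg_right hd (Complex.normSq_nonneg _)
  constructor
  · intro x hx
    obtain ⟨hden, hnum⟩ := key x
    rw [rayleigh, le_div_iff₀ hx]
    calc lam ⟨0, hp⟩ * (pairing p q x x).re
        = lam ⟨0, hp⟩ * (pairing p q (U⁻¹.mulVec x) (U⁻¹.mulVec x)).re := by rw [hden]
      _ ≤ (pairing p q (D.mulVec (U⁻¹.mulVec x)) (U⁻¹.mulVec x)).re := hterm _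
      _ = (pairing p q (A.mulVec x) x).re := by rw [hnum]
  · -- the minimizer
    set i0 : Fin (p + q) := ⟨p - 1, by omega⟩ with hi0
    set y : Fin (p + q) → ℂ := Pi.single i0 1 with hy
    set x : Fin (p + q) → ℂ := U.mulVec y with hx
    have hyx : U⁻¹.mulVec x = y := by
      rw [hx, Matrix.mulVec_mulVec, Matrix.nonsing_inv_mul U hdet, Matrix.one_mulVec]
    have hi0p : (i0 : ℕ) < p := by simp [hi0]; omega
    have hyy : (pairing p q y y).re = 1 := by
      rw [pairing_self_re]
      rw [Finset.sum_eq_single i0]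
      · simp [hy, hi0p]
      · intro b _ hb
        simp [hy, Pi.single_eq_of_ne hb]
      · intro hmem; exact absurd (Finset.mem_univ i0) hmem
    have hDyy : (pairing p q (D.mulVec y) y).re = lam ⟨0, hp⟩ := by
      rw [hD, pairing_re_diag]
      rw [Finset.sum_eq_single i0]
      · have : dre p q lam mu i0 = lam ⟨0, hp⟩ := by
          simp only [dre, dif_pos hi0p]
          congr 1
          simp [hi0, Fin.ext_iff]
        simp [hy, hi0p, this]
      · intro b _ hb
        simp [hy, Pi.single_eq_of_ne hb]
      · intro hmem; exact absurd (Finset.mem_univ i0) hmem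
    obtain ⟨hden, hnum⟩ := key x
    refine ⟨x, ?_, ?_⟩
    · rw [hden, hyx, hyy]; norm_num
    · rw [rayleigh, hden, hnum, hyx, hyy, hDyy, div_one]
end

section
/- Let A be an admissible pseudo-Hermitian n×n matrix with eigenvalues λ_p ≥ … ≥ λ_1 > μ_1 ≥ … ≥ μ_q and pseudo-orthonormal eigenbasis v_1,…,v_p, w_1,…,w_q. For each 1 ≤ k ≤ p, λ_k = min of R_A(x) over x ∈ ℂⁿ₊ satisfying ⟨x, v_i⟩ = 0 for all 1 ≤ i ≤ k−1; precisely: every such x satisfies R_A(x) ≥ λ_k, and equality holds for x = v_k. -/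
open Matrix

/-- A pseudo-orthonormal eigenbasis `v_1, …, v_p, w_1, …, w_q` (0-indexed) of an admissible
matrix `A`: a basis of `ℂⁿ` with `A v_i = λ_i v_i`, `A w_j = μ_j w_j`, `⟨v_i,v_i⟩ = 1`,
`⟨w_j,w_j⟩ = −1`, and all pairings of distinct basis vectors zero. -/
def IsPseudoONEigenbasis (p q : ℕ) (A : Matrix (Fin (p + q)) (Fin (p + q)) ℂ)
    (lam : Fin p → ℝ) (mu : Fin q → ℝ)
    (v : Fin p → Fin (p + q) → ℂ) (w : Fin q → Fin (p + q) → ℂ) : Prop :=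
  LinearIndependent ℂ (Fin.append v w) ∧
  Submodule.span ℂ (Set.range (Fin.append v w)) = ⊤ ∧
  (∀ i, A.mulVec (v i) = (lam i : ℂ) • v i) ∧
  (∀ j, A.mulVec (w j) = (mu j : ℂ) • w j) ∧
  (∀ i i', pairing p q (v i) (v i') = if i = i' then 1 else 0) ∧
  (∀ j j', pairing p q (w j) (w j') = if j = j' then -1 else 0) ∧
  (∀ i j, pairing p q (v i) (w j) = 0) ∧
  (∀ j i, pairing p q (w j) (v i) = 0)

/- ## Auxiliary lemmas -/

noncomputable def psgn (p q : ℕ) (i : Fin (p + q)) : ℂ := if (i : ℕ) < p then 1 else -1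

lemma pairing_eq (p q : ℕ) (z w : Fin (p + q) → ℂ) :
    pairing p q z w = ∑ i, psgn p q i * (z i * (starRingEnd ℂ) (w i)) := by
  unfold pairing psgn
  refine Finset.sum_congr rfl fun i _ => ?_
  split <;> ring

lemma pairing_smul_left (p q : ℕ) (c : ℂ) (z w : Fin (p + q) → ℂ) :
    pairing p q (c • z) w = c * pairing p q z w := by
  rw [pairing_eq, pairing_eq, Finset.mul_sum]
  refine Finset.sum_congr rfl fun i _ => ?_
  simp [Pi.smul_apply]; ring

lemma pairing_sum_smul_left (p q : ℕ) (a : Fin (p + q) → ℂ)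
    (u : Fin (p + q) → Fin (p + q) → ℂ) (y : Fin (p + q) → ℂ) :
    pairing p q (∑ m, a m • u m) y = ∑ m, a m * pairing p q (u m) y := by
  simp only [pairing_eq, Finset.mul_sum]
  rw [Finset.sum_comm]
  refine Finset.sum_congr rfl fun i _ => ?_
  simp only [Finset.sum_apply, Pi.smul_apply, smul_eq_mul, Finset.sum_mul, Finset.mul_sum]
  refine Finset.sum_congr rfl fun m _ => ?_
  ring

lemma pairing_sum_smul_right (p q : ℕ) (b : Fin (p + q) → ℂ)
    (u : Fin (p + q) → Fin (p + q) → ℂ) (y : Fin (p + q) → ℂ) :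
    pairing p q y (∑ m, b m • u m) = ∑ m, (starRingEnd ℂ) (b m) * pairing p q y (u m) := by
  simp only [pairing_eq, Finset.sum_apply, Pi.smul_apply, smul_eq_mul, map_sum, _root_.map_mul,
    Finset.mul_sum]
  rw [Finset.sum_comm]
  refine Finset.sum_congr rfl fun m _ => ?_
  refine Finset.sum_congr rfl fun i _ => ?_
  ring

lemma pairing_sum_smul (p q : ℕ) (a b : Fin (p + q) → ℂ)
    (u : Fin (p + q) → Fin (p + q) → ℂ) :
    pairing p q (∑ m, a m • u m) (∑ m, b m • u m)
      = ∑ m, ∑ m', a m * (starRingEnd ℂ) (b m') * pairing p q (u m) (u m') := by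
  rw [pairing_sum_smul_left]
  refine Finset.sum_congr rfl fun m _ => ?_
  rw [pairing_sum_smul_right, Finset.mul_sum]
  refine Finset.sum_congr rfl fun m' _ => ?_
  ring

/-- `λ_k` is the minimum of `R_A(x)` over `x ∈ ℂⁿ₊` orthogonal to
`v_1, …, v_{k-1}`; the minimum is attained at `v_k`.  (Here `k` is 1-indexed,
`1 ≤ k ≤ p`, and `v i`, `lam i` are 0-indexed, so `λ_k = lam ⟨k-1,_⟩`.) -/
theorem lambda_k_min_orthogonal_to_lower_eigenvectors
    (p q : ℕ) (hp : 0 < p) (hq : 0 < q)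
    (A : Matrix (Fin (p + q)) (Fin (p + q)) ℂ)
    (lam : Fin p → ℝ) (mu : Fin q → ℝ)
    (v : Fin p → Fin (p + q) → ℂ) (w : Fin q → Fin (p + q) → ℂ)
    (hA : IsAdmissible p q hp hq A lam mu)
    (hvw : IsPseudoONEigenbasis p q A lam mu v w)
    (k : ℕ) (hk1 : 1 ≤ k) (hk2 : k ≤ p) :
    (∀ x : Fin (p + q) → ℂ, 0 < (pairing p q x x).re →
        (∀ i : Fin p, (i : ℕ) < k - 1 → pairing p q x (v i) = 0) →
        lam ⟨k - 1, by omega⟩ ≤ rayleigh p q A x) ∧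
    0 < (pairing p q (v ⟨k - 1, by omega⟩) (v ⟨k - 1, by omega⟩)).re ∧
    (∀ i : Fin p, (i : ℕ) < k - 1 → pairing p q (v ⟨k - 1, by omega⟩) (v i) = 0) ∧
    rayleigh p q A (v ⟨k - 1, by omega⟩) = lam ⟨k - 1, by omega⟩ := by
  obtain ⟨hli, hspan, hev, hew, hvv, hww, hvw0, hwv0⟩ := hvw
  obtain ⟨-, hmono, hanti, hgap, -⟩ := hA
  have hkk : k - 1 < p := by omega
  set kk : Fin p := ⟨k - 1, hkk⟩ with hkkdef
  set u : Fin (p + q) → Fin (p + q) → ℂ := Fin.append v w with hu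
  have happl : ∀ i : Fin p, u (Fin.castAdd q i) = v i := fun i => by
    rw [hu]; exact Fin.append_left v w i
  have happr : ∀ j : Fin q, u (Fin.natAdd p j) = w j := fun j => by
    rw [hu]; exact Fin.append_right v w j
  have horth : ∀ m m', pairing p q (u m) (u m') = if m = m' then psgn p q m else 0 := by
    intro m m'
    refine Fin.addCases (fun i => ?_) (fun j => ?_) m
    · refine Fin.addCases (fun i' => ?_) (fun j' => ?_) m'
      · rw [happl i, happl i', hvv i i']
        rcases eq_or_ne i i' with h | h
        · subst h
          rw [if_pos rfl, if_pos rfl]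
          unfold psgn
          rw [if_pos (by simpa using i.isLt)]
        · rw [if_neg h, if_neg (by simp [Fin.ext_iff] at h ⊢; omega)]
      · rw [happl i, happr j', hvw0 i j',
          if_neg (by simp [Fin.ext_iff]; omega)]
    · refine Fin.addCases (fun i' => ?_) (fun j' => ?_) m'
      · rw [happr j, happl i', hwv0 j i',
          if_neg (by simp [Fin.ext_iff]; omega)]
      · rw [happr j, happr j', hww j j']
        rcases eq_or_ne j j' with h | h
        · subst h
          rw [if_pos rfl, if_pos rfl]
          unfold psgn
          rw [if_neg (by simp)]
        · rw [if_neg h, if_neg (by simp [Fin.ext_iff] at h ⊢; omega)]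
  set dr : Fin (p + q) → ℝ :=
    fun m => if h : (m : ℕ) < p then lam ⟨m, h⟩
      else mu ⟨(m : ℕ) - p, by have := m.isLt; omega⟩ with hdrdef
  have hdr_l : ∀ i : Fin p, dr (Fin.castAdd q i) = lam i := by
    intro i
    have h : ((Fin.castAdd q i : Fin (p + q)) : ℕ) < p := by simpa using i.isLt
    simp only [hdrdef]
    rw [dif_pos h]
    exact congrArg lam (Fin.ext (by simp))
  have hdr_r : ∀ j : Fin q, dr (Fin.natAdd p j) = mu j := by
    intro j
    have h : ¬ ((Fin.natAdd p j : Fin (p + q)) : ℕ) < p := by simp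
    simp only [hdrdef]
    rw [dif_neg h]
    exact congrArg mu (Fin.ext (by simp))
  have heig : ∀ m, A.mulVec (u m) = ((dr m : ℝ) : ℂ) • u m := by
    intro m
    refine Fin.addCases (fun i => ?_) (fun j => ?_) m
    · rw [happl i, hev i, hdr_l i]
    · rw [happr j, hew j, hdr_r j]
  have hvvkk : pairing p q (v kk) (v kk) = 1 := by rw [hvv kk kk, if_pos rfl]
  refine ⟨?_, ?_, ?_, ?_⟩
  · intro x hxpos hxorth
    have hx_mem : x ∈ Submodule.span ℂ (Set.range u) := by rw [hspan]; trivial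
    obtain ⟨c, hc⟩ := (Submodule.mem_span_range_iff_exists_fun ℂ).mp hx_mem
    have hSc : pairing p q x x = ∑ m, c m * (starRingEnd ℂ) (c m) * psgn p q m := by
      rw [← hc, pairing_sum_smul]
      refine Finset.sum_congr rfl fun m _ => ?_
      rw [Finset.sum_eq_single m]
      · rw [horth, if_pos rfl]
      · intro m' _ hne
        rw [horth, if_neg (fun h => hne h.symm), mul_zero]
      · intro h; exact absurd (Finset.mem_univ m) h
    have hNx : A.mulVec x = ∑ m, (c m * ((dr m : ℝ) : ℂ)) • u m := by
      rw [← hc, ← Matrix.mulVecLin_apply, map_sum]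
      refine Finset.sum_congr rfl fun m _ => ?_
      rw [_root_.map_smul, Matrix.mulVecLin_apply, heig m, smul_smul]
    have hNc : pairing p q (A.mulVec x) x
        = ∑ m, (c m * ((dr m : ℝ) : ℂ)) * (starRingEnd ℂ) (c m) * psgn p q m := by
      rw [hNx, ← hc, pairing_sum_smul]
      refine Finset.sum_congr rfl fun m _ => ?_
      rw [Finset.sum_eq_single m]
      · rw [horth, if_pos rfl]
      · intro m' _ hne
        rw [horth, if_neg (fun h => hne h.symm), mul_zero]
      · intro h; exact absurd (Finset.mem_univ m) h
    have hSre : (pairing p q x x).re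
        = ∑ m, Complex.normSq (c m) * (if (m : ℕ) < p then (1 : ℝ) else -1) := by
      rw [hSc, Complex.re_sum]
      refine Finset.sum_congr rfl fun m _ => ?_
      rw [Complex.mul_conj]
      by_cases h : (m : ℕ) < p <;> simp [psgn, h]
    have hNre : (pairing p q (A.mulVec x) x).re
        = ∑ m, dr m * Complex.normSq (c m) * (if (m : ℕ) < p then (1 : ℝ) else -1) := by
      rw [hNc, Complex.re_sum]
      refine Finset.sum_congr rfl fun m _ => ?_
      rw [show c m * ((dr m : ℝ) : ℂ) * (starRingEnd ℂ) (c m)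
          = ((dr m : ℝ) : ℂ) * (c m * (starRingEnd ℂ) (c m)) by ring, Complex.mul_conj]
      by_cases h : (m : ℕ) < p <;>
        simp [psgn, h, ← Complex.ofReal_mul, mul_assoc]
    have hc0 : ∀ i : Fin p, (i : ℕ) < k - 1 → c (Fin.castAdd q i) = 0 := by
      intro i hi
      have h0 := hxorth i hi
      rw [← hc, ← happl i, pairing_sum_smul_left] at h0
      rw [Finset.sum_eq_single (Fin.castAdd q i)] at h0
      · rw [horth, if_pos rfl] at h0
        have hps : psgn p q (Fin.castAdd q i) = 1 := by
          unfold psgn; rw [if_pos (by simpa using i.isLt)]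
        rw [hps, mul_one] at h0
        exact h0
      · intro m' _ hne
        rw [horth, if_neg hne, mul_zero]
      · intro h; exact absurd (Finset.mem_univ _) h
    have hnn : ∀ m, lam kk * (Complex.normSq (c m) * (if (m : ℕ) < p then (1 : ℝ) else -1))
        ≤ dr m * Complex.normSq (c m) * (if (m : ℕ) < p then (1 : ℝ) else -1) := by
      intro m
      refine Fin.addCases (fun i => ?_) (fun j => ?_) m
      · rw [if_pos (by simpa using i.isLt), hdr_l i]
        rcases lt_or_ge (i : ℕ) (k - 1) with hlt | hge
        · rw [hc0 i hlt]; simp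
        · have hle : lam kk ≤ lam i := hmono (by simpa [hkkdef, Fin.le_def] using hge)
          nlinarith [Complex.normSq_nonneg (c (Fin.castAdd q i))]
      · rw [if_neg (by simp), hdr_r j]
        have h1 : mu j ≤ mu ⟨0, hq⟩ := hanti (by simp [Fin.le_def])
        have h2 : lam ⟨0, hp⟩ ≤ lam kk := hmono (by simp [hkkdef, Fin.le_def])
        nlinarith [Complex.normSq_nonneg (c (Fin.natAdd p j))]
    have hsum : lam kk * (pairing p q x x).re ≤ (pairing p q (A.mulVec x) x).re := by
      rw [hSre, hNre, Finset.mul_sum]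
      exact Finset.sum_le_sum fun m _ => hnn m
    exact (le_div_iff₀ hxpos).mpr hsum
  · rw [hvvkk]; norm_num
  · intro i hi
    have hne : kk ≠ i := by
      intro h
      have := congrArg Fin.val h
      simp [hkkdef] at this
      omega
    rw [hvv kk i, if_neg hne]
  · show rayleigh p q A (v kk) = lam kk
    unfold rayleigh
    rw [hev kk, pairing_smul_left, hvvkk]
    simp
end

section
/- (Lidskii–Wielandt analogue for λ's.) Let A and B be admissible pseudo-Hermitian n×n matrices, and suppose C = A + B is also admissible. Denote by λ_p(·) ≥ … ≥ λ_1(·) > μ_1(·) ≥ … ≥ μ_q(·) the eigenvalues of each of A, B, C. Then for every m and all integers 1 ≤ i_1 < i_2 < … < i_m ≤ p one has Σ_{k=1}^m λ_{i_k}(C) ≥ Σ_{k=1}^m λ_{i_k}(A) + Σ_{k=1}^m λ_k(B). -/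
open Matrix

namespace LW

variable {N : ℕ}

noncomputable def nsq (x : Fin N → ℂ) : ℝ := ∑ i, Complex.normSq (x i)

noncomputable def quad (M : Matrix (Fin N) (Fin N) ℂ) (x : Fin N → ℂ) : ℝ :=
  (star x ⬝ᵥ (M *ᵥ x)).re

def UDiag (M : Matrix (Fin N) (Fin N) ℂ) (d : Fin N → ℝ) : Prop :=
  ∃ U : Matrix (Fin N) (Fin N) ℂ, U * Uᴴ = 1 ∧
    M = U * diagonal (fun i => (d i : ℂ)) * Uᴴ

lemma nsq_nonneg (x : Fin N → ℂ) : 0 ≤ nsq x :=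
  Finset.sum_nonneg fun i _ => Complex.normSq_nonneg _

lemma nsq_pos {x : Fin N → ℂ} (hx : x ≠ 0) : 0 < nsq x := by
  rcases Function.ne_iff.mp hx with ⟨i, hi⟩
  have : (0:ℝ) < Complex.normSq (x i) := by
    simpa [Complex.normSq_pos] using hi
  refine lt_of_lt_of_le this ?_
  exact Finset.single_le_sum (f := fun j => Complex.normSq (x j))
    (fun j _ => Complex.normSq_nonneg _) (Finset.mem_univ i)

lemma dot_self_eq (x : Fin N → ℂ) : star x ⬝ᵥ x = ((nsq x : ℝ) : ℂ) := by
  simp only [dotProduct, nsq, Pi.star_apply]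
  push_cast
  refine Finset.sum_congr rfl fun i _ => ?_
  rw [Complex.normSq_eq_conj_mul_self]
  rfl

lemma quad_add (M M' : Matrix (Fin N) (Fin N) ℂ) (x : Fin N → ℂ) :
    quad (M + M') x = quad M x + quad M' x := by
  simp [quad, add_mulVec, dotProduct_add]

lemma quad_smul_one (ν : ℝ) (x : Fin N → ℂ) :
    quad ((ν : ℂ) • (1 : Matrix (Fin N) (Fin N) ℂ)) x = ν * nsq x := by
  rw [quad, smul_mulVec, one_mulVec, dotProduct_smul, dot_self_eq]
  simp

lemma dot_unitary {U : Matrix (Fin N) (Fin N) ℂ} (hU : U * Uᴴ = 1) (y z : Fin N → ℂ) :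
    star (U *ᵥ y) ⬝ᵥ (U *ᵥ z) = star y ⬝ᵥ z := by
  haveI hUU : Uᴴ * U = 1 := mul_eq_one_comm.mp hU
  rw [star_mulVec, dotProduct_mulVec, vecMul_vecMul, hUU, vecMul_one]

lemma nsq_unitary {U : Matrix (Fin N) (Fin N) ℂ} (hU : U * Uᴴ = 1) (y : Fin N → ℂ) :
    nsq (U *ᵥ y) = nsq y := by
  have h := dot_unitary hU y y
  have h1 := dot_self_eq (U *ᵥ y)
  have h2 := dot_self_eq y
  rw [h1, h2] at h
  exact_mod_cast h

lemma quad_udiag {U : Matrix (Fin N) (Fin N) ℂ} (hU : U * Uᴴ = 1) (d : Fin N → ℝ)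
    (y : Fin N → ℂ) :
    quad (U * diagonal (fun i => (d i : ℂ)) * Uᴴ) (U *ᵥ y)
      = ∑ i, d i * Complex.normSq (y i) := by
  have hUU : Uᴴ * U = 1 := mul_eq_one_comm.mp hU
  have hmv : (U * diagonal (fun i => (d i : ℂ)) * Uᴴ) *ᵥ (U *ᵥ y)
      = U *ᵥ (diagonal (fun i => (d i : ℂ)) *ᵥ y) := by
    rw [mulVec_mulVec, mul_assoc (U * diagonal fun i => ((d i : ℝ) : ℂ)) Uᴴ U, hUU, mul_one, ← mulVec_mulVec]
  rw [quad, hmv, dot_unitary hU]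
  simp only [dotProduct, mulVec_diagonal, Pi.star_apply]
  rw [Complex.re_sum]
  refine Finset.sum_congr rfl fun i _ => ?_
  have : (starRingEnd ℂ) (y i) * ((d i : ℂ) * y i)
      = ((d i : ℝ) : ℂ) * ((Complex.normSq (y i) : ℝ) : ℂ) := by
    rw [Complex.normSq_eq_conj_mul_self]
    push_cast
    ring
  rw [show star (y i) = (starRingEnd ℂ) (y i) from rfl, this]
  push_cast
  simp


noncomputable def sbasis (i : Fin N) : Fin N → ℂ := Pi.single i 1

noncomputable def coordSub (P : Finset (Fin N)) : Submodule ℂ (Fin N → ℂ) :=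
  Submodule.span ℂ (sbasis '' (P : Set (Fin N)))

lemma coordSub_apply_eq_zero {P : Finset (Fin N)} {x : Fin N → ℂ}
    (hx : x ∈ coordSub P) {i : Fin N} (hi : i ∉ P) : x i = 0 := by
  have hle : coordSub P ≤ LinearMap.ker (LinearMap.proj (R := ℂ) (φ := fun _ : Fin N => ℂ) i) := by
    rw [coordSub, Submodule.span_le]
    rintro _ ⟨j, hj, rfl⟩
    have hji : j ≠ i := by rintro rfl; exact hi hj
    simp [LinearMap.mem_ker, sbasis, Pi.single_apply, hji]
  simpa using hle hx

lemma mem_coordSub {P : Finset (Fin N)} {x : Fin N → ℂ}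
    (hx : ∀ i ∉ P, x i = 0) : x ∈ coordSub P := by
  have hxe : x = ∑ i ∈ P, x i • sbasis i := by
    funext j
    rw [Finset.sum_apply]
    by_cases hj : j ∈ P
    · rw [Finset.sum_eq_single j]
      · simp [sbasis]
      · intro b _ hbj; simp [sbasis, Pi.single_apply, hbj]
      · intro h; exact absurd hj h
    · rw [hx j hj]
      refine (Finset.sum_eq_zero fun b hb => ?_).symm
      have : b ≠ j := by rintro rfl; exact hj hb
      simp [sbasis, Pi.single_apply, this]
  rw [hxe]
  exact Submodule.sum_mem _ fun i hi =>
    Submodule.smul_mem _ _ (Submodule.subset_span ⟨i, hi, rfl⟩)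

lemma coordSub_finrank (P : Finset (Fin N)) :
    Module.finrank ℂ (coordSub P) = P.card := by
  classical
  have hrange : (sbasis '' (P : Set (Fin N)))
      = Set.range (fun i : {x // x ∈ P} => sbasis (i : Fin N)) :=
    Set.image_eq_range _ _
  have hli : LinearIndependent ℂ (fun i : {x // x ∈ P} => sbasis (i : Fin N)) := by
    have hb : LinearIndependent ℂ (fun i : Fin N => sbasis i) := by
      rw [Fintype.linearIndependent_iff]
      intro g hg j
      have := congrFun hg j
      simpa [sbasis, Finset.sum_apply, Pi.single_apply] using this
    exact hb.comp _ Subtype.val_injective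
  rw [coordSub, hrange, finrank_span_eq_card hli]
  simp

lemma map_finrank_unitary {U : Matrix (Fin N) (Fin N) ℂ} (hU : U * Uᴴ = 1)
    (W : Submodule ℂ (Fin N → ℂ)) :
    Module.finrank ℂ (Submodule.map (Matrix.mulVecLin U) W) = Module.finrank ℂ W := by
  have hUU : Uᴴ * U = 1 := mul_eq_one_comm.mp hU
  have hinj : Function.Injective (Matrix.mulVecLin U) := by
    intro a b hab
    have : Uᴴ *ᵥ (U *ᵥ a) = Uᴴ *ᵥ (U *ᵥ b) := by
      simpa [Matrix.mulVecLin_apply] using congrArg (fun v => Uᴴ *ᵥ v) hab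
    simpa [mulVec_mulVec, hUU] using this
  exact (Submodule.equivMapOfInjective _ hinj W).finrank_eq.symm

lemma map_finrank_isUnit {S : Matrix (Fin N) (Fin N) ℂ} (hS : IsUnit S)
    (W : Submodule ℂ (Fin N → ℂ)) :
    Module.finrank ℂ (Submodule.map (Matrix.mulVecLin S) W) = Module.finrank ℂ W := by
  have hdet : IsUnit S.det := (Matrix.isUnit_iff_isUnit_det S).mp hS
  have h1 : S⁻¹ * S = 1 := Matrix.nonsing_inv_mul S hdet
  have hinj : Function.Injective (Matrix.mulVecLin S) := by
    intro a b hab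
    have : S⁻¹ *ᵥ (S *ᵥ a) = S⁻¹ *ᵥ (S *ᵥ b) := by
      simpa [Matrix.mulVecLin_apply] using congrArg (fun v => S⁻¹ *ᵥ v) hab
    simpa [mulVec_mulVec, h1] using this
  exact (Submodule.equivMapOfInjective _ hinj W).finrank_eq.symm

lemma cf_lower {M : Matrix (Fin N) (Fin N) ℂ} {d : Fin N → ℝ} (hM : UDiag M d)
    (hd : Monotone d) (t : ℝ) (k : ℕ) (hk : 1 ≤ k) (hkN : k ≤ N)
    (V : Submodule ℂ (Fin N → ℂ)) (hV : k ≤ Module.finrank ℂ V)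
    (hquad : ∀ x ∈ V, t * nsq x ≤ quad M x)
    (j : Fin N) (hjk : (j : ℕ) = N - k) :
    t ≤ d j := by
  classical
  by_contra hlt
  push_neg at hlt
  obtain ⟨U, hU, hMU⟩ := hM
  set W : Submodule ℂ (Fin N → ℂ) :=
    Submodule.map (Matrix.mulVecLin U) (coordSub (Finset.Iic j)) with hW
  have hWrank : Module.finrank ℂ W = N - k + 1 := by
    rw [hW, map_finrank_unitary hU, coordSub_finrank, Fin.card_Iic, hjk]
  have hinterrank : 1 ≤ Module.finrank ℂ (V ⊓ W  : Submodule ℂ (Fin N → ℂ)) := by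
    have hsum := Submodule.finrank_sup_add_finrank_inf_eq V W
    have hsup : Module.finrank ℂ (V ⊔ W : Submodule ℂ (Fin N → ℂ)) ≤ N := by
      have := Submodule.finrank_le (V ⊔ W : Submodule ℂ (Fin N → ℂ))
      simpa [Module.finrank_fintype_fun_eq_card] using this
    omega
  have hne : (V ⊓ W : Submodule ℂ (Fin N → ℂ)) ≠ ⊥ := by
    intro h
    rw [h] at hinterrank
    simp at hinterrank
  obtain ⟨x, hxmem, hxne⟩ := Submodule.exists_mem_ne_zero_of_ne_bot hne
  obtain ⟨hxV, hxW⟩ := hxmem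
  obtain ⟨y, hy, hxy⟩ := hxW
  have hq1 : quad M x ≤ d j * nsq x := by
    have hx' : x = U *ᵥ y := by rw [← hxy]; rfl
    rw [hx', hMU, quad_udiag hU, nsq_unitary hU]
    rw [nsq, Finset.mul_sum]
    refine Finset.sum_le_sum fun i _ => ?_
    by_cases hyi : y i = 0
    · simp [hyi]
    · have hiP : i ∈ Finset.Iic j := by
        by_contra hiP
        exact hyi (coordSub_apply_eq_zero hy hiP)
      have : d i ≤ d j := hd (Finset.mem_Iic.mp hiP)
      exact mul_le_mul_of_nonneg_right this (Complex.normSq_nonneg _)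
  have hq2 : t * nsq x ≤ quad M x := hquad x hxV
  have hpos : 0 < nsq x := nsq_pos hxne
  nlinarith

lemma cf_exists {M : Matrix (Fin N) (Fin N) ℂ} {d : Fin N → ℝ} (hM : UDiag M d)
    (hd : Monotone d) (j : Fin N) :
    ∃ V : Submodule ℂ (Fin N → ℂ), Module.finrank ℂ V = N - (j : ℕ) ∧
      ∀ x ∈ V, d j * nsq x ≤ quad M x := by
  classical
  obtain ⟨U, hU, hMU⟩ := hM
  refine ⟨Submodule.map (Matrix.mulVecLin U) (coordSub (Finset.Ici j)), ?_, ?_⟩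
  · rw [map_finrank_unitary hU, coordSub_finrank, Fin.card_Ici]
  · rintro x ⟨y, hy, rfl⟩
    have hx' : Matrix.mulVecLin U y = U *ᵥ y := rfl
    rw [hx', hMU, quad_udiag hU, nsq_unitary hU, nsq, Finset.mul_sum]
    refine Finset.sum_le_sum fun i _ => ?_
    by_cases hyi : y i = 0
    · simp [hyi]
    · have hiP : i ∈ Finset.Ici j := by
        by_contra hiP
        exact hyi (coordSub_apply_eq_zero hy hiP)
      have : d j ≤ d i := hd (Finset.mem_Ici.mp hiP)
      exact mul_le_mul_of_nonneg_right this (Complex.normSq_nonneg _)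

lemma udiag_mono {M M' : Matrix (Fin N) (Fin N) ℂ} {d d' : Fin N → ℝ}
    (hM : UDiag M d) (hd : Monotone d) (hM' : UDiag M' d') (hd' : Monotone d')
    (h : ∀ x, quad M x ≤ quad M' x) (j : Fin N) : d j ≤ d' j := by
  obtain ⟨V, hVrank, hVq⟩ := cf_exists hM hd j
  have hj : (j : ℕ) < N := j.isLt
  exact cf_lower hM' hd' (d j) (N - (j:ℕ)) (by omega) (by omega) V (le_of_eq hVrank.symm)
    (fun x hx => le_trans (hVq x hx) (h x)) j (by omega)

lemma udiag_trace {M : Matrix (Fin N) (Fin N) ℂ} {d : Fin N → ℝ} (hM : UDiag M d) :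
    M.trace = ((∑ i, d i : ℝ) : ℂ) := by
  obtain ⟨U, hU, hMU⟩ := hM
  have hUU : Uᴴ * U = 1 := mul_eq_one_comm.mp hU
  rw [hMU, Matrix.trace_mul_cycle, hUU, one_mul, Matrix.trace_diagonal]
  push_cast
  rfl


lemma udiag_perm {M : Matrix (Fin N) (Fin N) ℂ} {d : Fin N → ℝ} (hM : UDiag M d)
    (e : Equiv.Perm (Fin N)) : UDiag M (d ∘ e) := by
  obtain ⟨U, hU, hMU⟩ := hM
  refine ⟨U.submatrix id e, ?_, ?_⟩
  · have : (U.submatrix id ⇑e) * (U.submatrix id ⇑e)ᴴ = (U * Uᴴ).submatrix id id := by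
      rw [conjTranspose_submatrix, submatrix_mul_equiv]
    rw [this, submatrix_id_id, hU]
  · have hdg : (diagonal (fun i => ((d (e i) : ℝ) : ℂ)))
        = (diagonal (fun i => ((d i : ℝ) : ℂ))).submatrix e e := by
      rw [submatrix_diagonal_equiv]
      rfl
    calc M = (U * diagonal (fun i => ((d i : ℝ) : ℂ)) * Uᴴ).submatrix id id := by
            rw [submatrix_id_id]; exact hMU
    _ = U.submatrix id e * diagonal (fun i => ((d (e i) : ℝ) : ℂ)) * (U.submatrix id e)ᴴ := by
            rw [hdg, conjTranspose_submatrix, submatrix_mul_equiv, submatrix_mul_equiv]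

lemma udiag_herm {M : Matrix (Fin N) (Fin N) ℂ} {d : Fin N → ℝ} (hM : UDiag M d) :
    M.IsHermitian := by
  obtain ⟨U, hU, hMU⟩ := hM
  have hdg : (diagonal (fun i => ((d i : ℝ) : ℂ)))ᴴ = diagonal (fun i => ((d i : ℝ) : ℂ)) := by
    have hst : (star fun i => ((d i : ℝ) : ℂ)) = fun i => ((d i : ℝ) : ℂ) :=
      funext fun i => Complex.conj_ofReal (d i)
    rw [diagonal_conjTranspose, hst]
  rw [Matrix.IsHermitian, hMU, conjTranspose_mul, conjTranspose_mul,
    conjTranspose_conjTranspose, hdg, ← mul_assoc]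

lemma exists_udiag_sorted {M : Matrix (Fin N) (Fin N) ℂ} (hM : M.IsHermitian) :
    ∃ d : Fin N → ℝ, Monotone d ∧ UDiag M d := by
  refine ⟨hM.eigenvalues ∘ Tuple.sort hM.eigenvalues, Tuple.monotone_sort _, ?_⟩
  have base : UDiag M hM.eigenvalues := by
    refine ⟨(hM.eigenvectorUnitary : Matrix (Fin N) (Fin N) ℂ), ?_, ?_⟩
    · exact (Matrix.mem_unitaryGroup_iff).mp hM.eigenvectorUnitary.2
    · have := hM.spectral_theorem
      rw [Unitary.conjStarAlgAut_apply] at this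
      exact this
  exact udiag_perm base _

lemma udiag_shift {M : Matrix (Fin N) (Fin N) ℂ} {d : Fin N → ℝ} (hM : UDiag M d) (ν : ℝ) :
    UDiag (M + (ν : ℂ) • (1 : Matrix (Fin N) (Fin N) ℂ)) (fun i => d i + ν) := by
  obtain ⟨U, hU, hMU⟩ := hM
  refine ⟨U, hU, ?_⟩
  have h1 : (diagonal (fun i => ((d i + ν : ℝ) : ℂ)))
      = diagonal (fun i => ((d i : ℝ) : ℂ)) + (ν : ℂ) • (1 : Matrix (Fin N) (Fin N) ℂ) := by
    rw [smul_one_eq_diagonal, diagonal_add]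
    congr 1
    funext i
    push_cast
    ring
  rw [h1, mul_add, add_mul, ← hMU]
  congr 1
  rw [Matrix.mul_smul, Matrix.smul_mul, mul_one, hU]


lemma herm_lidskii {A B : Matrix (Fin N) (Fin N) ℂ} {a b c : Fin N → ℝ}
    (hA : UDiag A a) (ha : Monotone a) (hB : UDiag B b) (hb : Monotone b)
    (hC : UDiag (A + B) c) (hc : Monotone c)
    (m : ℕ) (hm : m ≤ N) (idx : Fin m → Fin N) (hidx : StrictMono idx) :
    ∑ k : Fin m, a (idx k) + ∑ k : Fin m, b (Fin.castLE hm k)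
      ≤ ∑ k : Fin m, c (idx k) := by
  classical
  rcases Nat.eq_zero_or_pos m with hm0 | hm0
  · subst hm0; simp
  have hmN : m - 1 < N := by omega
  set ν : ℝ := b ⟨m - 1, hmN⟩ with hν
  obtain ⟨Ub, hUb, hBeq⟩ := hB
  set dm : Fin N → ℝ := fun i => min (b i - ν) 0 with hdm
  set dp : Fin N → ℝ := fun i => max (b i - ν) 0 with hdp
  set Bm := Ub * diagonal (fun i => ((dm i : ℝ) : ℂ)) * Ubᴴ with hBm
  set Bp := Ub * diagonal (fun i => ((dp i : ℝ) : ℂ)) * Ubᴴ with hBp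
  have hBmU : UDiag Bm dm := ⟨Ub, hUb, hBm⟩
  have hid : (ν : ℂ) • (1 : Matrix (Fin N) (Fin N) ℂ)
      = Ub * diagonal (fun _ : Fin N => ((ν : ℝ) : ℂ)) * Ubᴴ := by
    rw [← smul_one_eq_diagonal, Matrix.mul_smul, mul_one, Matrix.smul_mul, hUb]
  have hDsum : diagonal (fun i : Fin N => ((dm i : ℝ) : ℂ))
      + diagonal (fun _ : Fin N => ((ν : ℝ) : ℂ))
      + diagonal (fun i : Fin N => ((dp i : ℝ) : ℂ))
      = diagonal (fun i : Fin N => ((b i : ℝ) : ℂ)) := by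
    rw [diagonal_add, diagonal_add]
    have harg : (fun i : Fin N => ((dm i : ℝ) : ℂ) + ((ν : ℝ) : ℂ) + ((dp i : ℝ) : ℂ))
        = fun i : Fin N => ((b i : ℝ) : ℂ) := by
      funext i
      have hmm := min_add_max (b i - ν) (0 : ℝ)
      have hre : dm i + ν + dp i = b i := by
        simp only [hdm, hdp]
        linarith
      exact_mod_cast hre
    rw [harg]
  have hsplitB : B = Bm + (ν : ℂ) • 1 + Bp := by
    rw [hBeq, ← hDsum, hBm, hBp, hid]
    simp only [mul_add, add_mul]
  have hquadBp : ∀ x, 0 ≤ quad Bp x := by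
    intro x
    have hx : x = Ub *ᵥ (Ubᴴ *ᵥ x) := by
      rw [mulVec_mulVec, hUb, one_mulVec]
    rw [hx, hBp, quad_udiag hUb]
    exact Finset.sum_nonneg fun i _ =>
      mul_nonneg (le_max_right _ _) (Complex.normSq_nonneg _)
  have hquadBm : ∀ x, quad Bm x ≤ 0 := by
    intro x
    have hx : x = Ub *ᵥ (Ubᴴ *ᵥ x) := by
      rw [mulVec_mulVec, hUb, one_mulVec]
    rw [hx, hBm, quad_udiag hUb]
    refine Finset.sum_nonpos fun i _ => ?_
    have h1 : dm i ≤ 0 := min_le_right _ _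
    have := mul_le_mul_of_nonneg_right h1 (Complex.normSq_nonneg ((Ubᴴ *ᵥ x) i))
    simpa using this
  have hABm_herm : (A + Bm).IsHermitian := (udiag_herm hA).add (udiag_herm hBmU)
  obtain ⟨e, he, hE⟩ := exists_udiag_sorted hABm_herm
  -- (i)
  have hec : ∀ j, e j + ν ≤ c j := by
    have h1 : UDiag (A + Bm + (ν : ℂ) • 1) (fun i => e i + ν) := udiag_shift hE ν
    have hmono1 : Monotone (fun i => e i + ν) := fun i j hij => by
      have := he hij; dsimp; linarith
    refine fun j => udiag_mono h1 hmono1 hC hc (fun x => ?_) j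
    have hrew : A + B = (A + Bm + (ν : ℂ) • 1) + Bp := by
      rw [hsplitB]; abel
    have hgoal : quad (A + B) x = quad (A + Bm + (ν : ℂ) • 1) x + quad Bp x := by
      rw [hrew, quad_add]
    rw [hgoal]
    linarith [hquadBp x]
  -- (ii)
  have hea : ∀ j, e j ≤ a j := by
    refine fun j => udiag_mono hE he hA ha (fun x => ?_) j
    rw [quad_add]
    linarith [hquadBm x]
  -- (iii) trace identity
  have htr : ∑ i, e i = ∑ i, a i + ∑ i, dm i := by
    have h1 := udiag_trace hE
    have h2 := udiag_trace hA
    have h3 := udiag_trace hBmU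
    have h4 : (A + Bm).trace = A.trace + Bm.trace := trace_add _ _
    rw [h1, h2, h3] at h4
    exact_mod_cast h4
  -- dm sum
  set emb : Fin m ↪ Fin N := ⟨Fin.castLE hm, Fin.castLE_injective hm⟩ with hemb
  set S : Finset (Fin N) := Finset.univ.map emb with hS
  have hmemS : ∀ i : Fin N, i ∈ S ↔ (i : ℕ) < m := by
    intro i
    simp only [hS, Finset.mem_map, Finset.mem_univ, true_and, hemb,
      Function.Embedding.coeFn_mk]
    constructor
    · rintro ⟨k, rfl⟩; exact k.isLt
    · intro hi; exact ⟨⟨(i : ℕ), hi⟩, by apply Fin.ext; rfl⟩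
  have hdm_zero : ∀ i : Fin N, i ∉ S → dm i = 0 := by
    intro i hi
    have him : m ≤ (i : ℕ) := by
      by_contra h
      exact hi ((hmemS i).mpr (by omega))
    have : ν ≤ b i := hb (by rw [Fin.le_def]; simp; omega)
    simp only [hdm]
    exact min_eq_right (by linarith)
  have hdm_eq : ∀ i : Fin N, i ∈ S → dm i = b i - ν := by
    intro i hi
    have him : (i : ℕ) < m := (hmemS i).mp hi
    have : b i ≤ ν := hb (by rw [Fin.le_def]; simp; omega)
    simp only [hdm]
    exact min_eq_left (by linarith)
  have hdm_sum : ∑ i, dm i = ∑ k : Fin m, (b (Fin.castLE hm k) - ν) := by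
    have h1 : ∑ i ∈ S, dm i = ∑ i : Fin N, dm i :=
      (Finset.sum_subset (Finset.subset_univ S) (fun i _ hi => hdm_zero i hi))
    have h2 : ∑ i ∈ S, dm i = ∑ i ∈ S, (b i - ν) :=
      Finset.sum_congr rfl (fun i hi => hdm_eq i hi)
    have h3 : ∑ i ∈ S, (b i - ν) = ∑ k : Fin m, (b (Fin.castLE hm k) - ν) := by
      rw [hS, Finset.sum_map]
      rfl
    rw [← h1, h2, h3]
  -- final assembly
  have key1 : ∑ k : Fin m, e (idx k) + (m : ℝ) * ν ≤ ∑ k : Fin m, c (idx k) := by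
    have h1 : ∑ k : Fin m, (e (idx k) + ν) ≤ ∑ k : Fin m, c (idx k) :=
      Finset.sum_le_sum fun k _ => hec (idx k)
    rw [Finset.sum_add_distrib, Finset.sum_const, Finset.card_univ, Fintype.card_fin,
      nsmul_eq_mul] at h1
    linarith
  have key2 : ∑ i : Fin N, (e i - a i) ≤ ∑ k : Fin m, (e (idx k) - a (idx k)) := by
    have himg : ∑ i ∈ Finset.univ.image idx, (e i - a i)
        = ∑ k : Fin m, (e (idx k) - a (idx k)) :=
      Finset.sum_image (fun x _ y _ h => hidx.injective h)
    rw [← himg]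
    have hneg := Finset.sum_le_sum_of_subset_of_nonneg
      (f := fun i => -(e i - a i)) (Finset.subset_univ (Finset.univ.image idx))
      (fun i _ _ => by have := hea i; simp; linarith)
    simp only [Finset.sum_neg_distrib] at hneg
    linarith
  have hsub1 : ∑ i : Fin N, (e i - a i) = ∑ i, e i - ∑ i, a i := Finset.sum_sub_distrib _ _
  have hsub2 : ∑ k : Fin m, (e (idx k) - a (idx k))
      = ∑ k : Fin m, e (idx k) - ∑ k : Fin m, a (idx k) := Finset.sum_sub_distrib _ _
  have hsub3 : ∑ k : Fin m, (b (Fin.castLE hm k) - ν)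
      = ∑ k : Fin m, b (Fin.castLE hm k) - (m : ℝ) * ν := by
    rw [Finset.sum_sub_distrib, Finset.sum_const, Finset.card_univ, Fintype.card_fin,
      nsmul_eq_mul]
  linarith


section PseudoHermitian

variable {p q : ℕ}

/-- The sign tuple of `J`. -/
noncomputable def eps (p q : ℕ) (i : Fin (p + q)) : ℝ := if (i : ℕ) < p then 1 else -1

/-- The real diagonal entries. -/
noncomputable def realDiag (p q : ℕ) (lam : Fin p → ℝ) (mu : Fin q → ℝ)
    (i : Fin (p + q)) : ℝ :=
  if h : (i : ℕ) < p then lam ⟨p - 1 - (i : ℕ), by omega⟩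
  else mu ⟨(i : ℕ) - p, by have := i.isLt; omega⟩

lemma Jmat_eq_diagonal (p q : ℕ) :
    Jmat p q = diagonal (fun i => ((eps p q i : ℝ) : ℂ)) := by
  have harg : (fun i : Fin (p+q) => if (i:ℕ) < p then (1:ℂ) else -1)
      = fun i => ((eps p q i : ℝ) : ℂ) := by
    funext i; simp only [eps]; split <;> simp
  rw [Jmat, harg]

lemma diagEntries_eq (p q : ℕ) (lam : Fin p → ℝ) (mu : Fin q → ℝ) :
    diagEntries p q lam mu = fun i => ((realDiag p q lam mu i : ℝ) : ℂ) := by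
  funext i
  rw [diagEntries, realDiag]
  split <;> rfl

lemma Jmat_mul_self (p q : ℕ) : Jmat p q * Jmat p q = 1 := by
  rw [Jmat, diagonal_mul_diagonal]
  have : (fun i : Fin (p+q) => (if (i:ℕ) < p then (1:ℂ) else -1) * (if (i:ℕ) < p then 1 else -1))
      = fun _ => 1 := by
    funext i; split <;> ring
  rw [this, diagonal_one]

/-- From `S J Sᴴ = J` and invertibility, derive `Sᴴ J S = J`. -/
lemma conj_J_of_J_unitary {S : Matrix (Fin (p+q)) (Fin (p+q)) ℂ} (hS : IsUnit S)
    (hSJ : S * Jmat p q * Sᴴ = Jmat p q) : Sᴴ * Jmat p q * S = Jmat p q := by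
  have hdet : IsUnit S.det := (Matrix.isUnit_iff_isUnit_det S).mp hS
  have h1 : S⁻¹ * S = 1 := Matrix.nonsing_inv_mul S hdet
  have h2 : S * S⁻¹ = 1 := Matrix.mul_nonsing_inv S hdet
  have hinvJ : S⁻¹ * Jmat p q = Jmat p q * Sᴴ := by
    calc S⁻¹ * Jmat p q = S⁻¹ * (S * Jmat p q * Sᴴ) := by rw [hSJ]
    _ = (S⁻¹ * S) * Jmat p q * Sᴴ := by simp only [Matrix.mul_assoc]
    _ = Jmat p q * Sᴴ := by rw [h1, one_mul]
  have hSH : Sᴴ = Jmat p q * S⁻¹ * Jmat p q := by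
    calc Sᴴ = (Jmat p q * Jmat p q) * Sᴴ := by rw [Jmat_mul_self, one_mul]
    _ = Jmat p q * (Jmat p q * Sᴴ) := by rw [Matrix.mul_assoc]
    _ = Jmat p q * (S⁻¹ * Jmat p q) := by rw [hinvJ]
    _ = Jmat p q * S⁻¹ * Jmat p q := by rw [Matrix.mul_assoc]
  rw [hSH]
  calc Jmat p q * S⁻¹ * Jmat p q * Jmat p q * S
      = Jmat p q * S⁻¹ * (Jmat p q * Jmat p q) * S := by
        rw [Matrix.mul_assoc (Jmat p q * S⁻¹)]
  _ = Jmat p q * S⁻¹ * S := by rw [Jmat_mul_self, mul_one]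
  _ = Jmat p q * (S⁻¹ * S) := by rw [Matrix.mul_assoc]
  _ = Jmat p q := by rw [h1, mul_one]

/-- Transport of the `J`-form through a `J`-unitary similarity. -/
lemma dot_transport {S : Matrix (Fin (p+q)) (Fin (p+q)) ℂ} (hS : IsUnit S)
    (hSJS : Sᴴ * Jmat p q * S = Jmat p q) (M₀ : Matrix (Fin (p+q)) (Fin (p+q)) ℂ)
    (c : Fin (p+q) → ℂ) :
    star (S *ᵥ c) ⬝ᵥ (Jmat p q *ᵥ ((S * M₀ * S⁻¹) *ᵥ (S *ᵥ c)))
      = star c ⬝ᵥ (Jmat p q *ᵥ (M₀ *ᵥ c)) := by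
  have hdet : IsUnit S.det := (Matrix.isUnit_iff_isUnit_det S).mp hS
  have h1 : S⁻¹ * S = 1 := Matrix.nonsing_inv_mul S hdet
  have hcollapse : (S * M₀ * S⁻¹) *ᵥ (S *ᵥ c) = (S * M₀) *ᵥ c := by
    rw [mulVec_mulVec, Matrix.mul_assoc (S * M₀) S⁻¹ S, h1, mul_one]
  have hX : Sᴴ * (Jmat p q * (S * M₀)) = Jmat p q * M₀ := by
    rw [← Matrix.mul_assoc, ← Matrix.mul_assoc, hSJS]
  rw [hcollapse, mulVec_mulVec, star_mulVec, dotProduct_mulVec, vecMul_vecMul, hX,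
    ← dotProduct_mulVec, ← mulVec_mulVec]

/-- The embedding `ℂ^p → ℂ^{p+q}` by zero-padding. -/
noncomputable def embedL (p q : ℕ) : (Fin p → ℂ) →ₗ[ℂ] (Fin (p+q) → ℂ) where
  toFun y := fun i => if h : (i : ℕ) < p then y ⟨i, h⟩ else 0
  map_add' x y := by funext i; by_cases h : (i:ℕ) < p <;> simp [h]
  map_smul' m x := by funext i; by_cases h : (i:ℕ) < p <;> simp [h]

lemma embedL_injective (p q : ℕ) : Function.Injective (embedL p q) := by
  intro x y hxy
  funext k
  have := congrFun hxy (Fin.castAdd q k)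
  simpa [embedL, Fin.castAdd, Fin.is_lt] using this

lemma embedL_castAdd (y : Fin p → ℂ) (i : Fin p) :
    embedL p q y (Fin.castAdd q i) = y i := by
  simp only [embedL, LinearMap.coe_mk, AddHom.coe_mk]
  exact dif_pos i.isLt

lemma embedL_natAdd (y : Fin p → ℂ) (i : Fin q) :
    embedL p q y (Fin.natAdd p i) = 0 := by
  simp only [embedL, LinearMap.coe_mk, AddHom.coe_mk]
  rw [dif_neg]
  simp

lemma dot_embed (M : Matrix (Fin (p+q)) (Fin (p+q)) ℂ) (y : Fin p → ℂ) :
    star (embedL p q y) ⬝ᵥ (Jmat p q *ᵥ (M *ᵥ embedL p q y))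
      = star y ⬝ᵥ ((M.submatrix (Fin.castAdd q) (Fin.castAdd q)) *ᵥ y) := by
  rw [Jmat, dotProduct]
  rw [Fin.sum_univ_add]
  have h2 : ∀ i : Fin q,
      star (embedL p q y) (Fin.natAdd p i)
        * (diagonal (fun i : Fin (p+q) => if (i:ℕ) < p then (1:ℂ) else -1) *ᵥ (M *ᵥ embedL p q y))
          (Fin.natAdd p i) = 0 := by
    intro i
    rw [Pi.star_apply, embedL_natAdd]
    simp
  rw [Finset.sum_congr rfl (fun i _ => h2 i), Finset.sum_const, smul_zero, add_zero]
  rw [dotProduct]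
  refine Finset.sum_congr rfl fun i _ => ?_
  rw [Pi.star_apply, Pi.star_apply, embedL_castAdd, mulVec_diagonal]
  have hlt : ((Fin.castAdd q i : Fin (p+q)) : ℕ) < p := i.isLt
  rw [if_pos hlt, one_mul]
  congr 1
  rw [mulVec, dotProduct, Fin.sum_univ_add, mulVec, dotProduct]
  have h3 : ∀ j : Fin q, M (Fin.castAdd q i) (Fin.natAdd p j) * embedL p q y (Fin.natAdd p j) = 0 := by
    intro j; rw [embedL_natAdd, mul_zero]
  rw [Finset.sum_congr rfl (fun j _ => h3 j), Finset.sum_const, smul_zero, add_zero]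
  refine Finset.sum_congr rfl fun j _ => ?_
  rw [embedL_castAdd]
  rfl

lemma dot_embed_id (y : Fin p → ℂ) :
    star (embedL p q y) ⬝ᵥ (Jmat p q *ᵥ embedL p q y) = star y ⬝ᵥ y := by
  have h := dot_embed (p := p) (q := q) 1 y
  rw [one_mulVec] at h
  have hsub : (1 : Matrix (Fin (p+q)) (Fin (p+q)) ℂ).submatrix (Fin.castAdd q) (Fin.castAdd q)
      = (1 : Matrix (Fin p) (Fin p) ℂ) :=
    Matrix.submatrix_one _ (Fin.castAdd_injective p q)
  rw [hsub, one_mulVec] at h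
  exact h


lemma dot_transport_id {S : Matrix (Fin (p+q)) (Fin (p+q)) ℂ}
    (hSJS : Sᴴ * Jmat p q * S = Jmat p q) (c : Fin (p+q) → ℂ) :
    star (S *ᵥ c) ⬝ᵥ (Jmat p q *ᵥ (S *ᵥ c)) = star c ⬝ᵥ (Jmat p q *ᵥ c) := by
  rw [mulVec_mulVec, star_mulVec, dotProduct_mulVec, vecMul_vecMul, ← Matrix.mul_assoc,
    hSJS, ← dotProduct_mulVec]

lemma dot_diagJ (lam : Fin p → ℝ) (mu : Fin q → ℝ) (c : Fin (p+q) → ℂ) :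
    (star c ⬝ᵥ (Jmat p q *ᵥ (diagonal (diagEntries p q lam mu) *ᵥ c))).re
      = ∑ i, eps p q i * realDiag p q lam mu i * Complex.normSq (c i) := by
  rw [Jmat_eq_diagonal, diagEntries_eq, dotProduct]
  simp only [mulVec_diagonal, Pi.star_apply]
  rw [Complex.re_sum]
  refine Finset.sum_congr rfl fun i _ => ?_
  have h : (starRingEnd ℂ) (c i)
        * (((eps p q i : ℝ) : ℂ) * (((realDiag p q lam mu i : ℝ) : ℂ) * c i))
      = (((eps p q i * realDiag p q lam mu i * Complex.normSq (c i) : ℝ)) : ℂ) := by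
    push_cast [Complex.normSq_eq_conj_mul_self]
    ring
  rw [show star (c i) = (starRingEnd ℂ) (c i) from rfl, h, Complex.ofReal_re]

lemma dot_J_id (c : Fin (p+q) → ℂ) :
    (star c ⬝ᵥ (Jmat p q *ᵥ c)).re = ∑ i, eps p q i * Complex.normSq (c i) := by
  rw [Jmat_eq_diagonal, dotProduct]
  simp only [mulVec_diagonal, Pi.star_apply]
  rw [Complex.re_sum]
  refine Finset.sum_congr rfl fun i _ => ?_
  have h : (starRingEnd ℂ) (c i) * (((eps p q i : ℝ) : ℂ) * c i)
      = (((eps p q i * Complex.normSq (c i) : ℝ)) : ℂ) := by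
    push_cast [Complex.normSq_eq_conj_mul_self]
    ring
  rw [show star (c i) = (starRingEnd ℂ) (c i) from rfl, h, Complex.ofReal_re]

lemma coord_bound (hp : 0 < p) (hq : 0 < q) (lam : Fin p → ℝ) (mu : Fin q → ℝ)
    (hlam : Monotone lam) (hmu : Antitone mu) (hgap : mu ⟨0, hq⟩ < lam ⟨0, hp⟩)
    (j : Fin p) (c : Fin (p+q) → ℂ)
    (hc : ∀ i : Fin (p+q), ¬((i:ℕ) < p - (j:ℕ) ∨ p ≤ (i:ℕ)) → c i = 0) :
    lam j * (star c ⬝ᵥ (Jmat p q *ᵥ c)).re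
      ≤ (star c ⬝ᵥ (Jmat p q *ᵥ (diagonal (diagEntries p q lam mu) *ᵥ c))).re := by
  rw [dot_diagJ, dot_J_id, Finset.mul_sum]
  refine Finset.sum_le_sum fun i _ => ?_
  by_cases hci : c i = 0
  · simp [hci]
  have hiT : (i:ℕ) < p - (j:ℕ) ∨ p ≤ (i:ℕ) := by
    by_contra h
    exact hci (hc i h)
  have hns := Complex.normSq_nonneg (c i)
  by_cases hip : (i:ℕ) < p
  · have hjp : (j:ℕ) < p := j.isLt
    have hilt : (i:ℕ) < p - (j:ℕ) := by
      rcases hiT with h | h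
      · exact h
      · omega
    have hle : lam j ≤ realDiag p q lam mu i := by
      rw [realDiag, dif_pos hip]
      refine hlam ?_
      have hval : (j:ℕ) ≤ p - 1 - (i:ℕ) := by omega
      rw [Fin.le_def]
      exact hval
    simp only [eps, if_pos hip, one_mul]
    nlinarith
  · have hle : realDiag p q lam mu i ≤ lam j := by
      rw [realDiag, dif_neg hip]
      calc mu ⟨(i:ℕ) - p, by have := i.isLt; omega⟩ ≤ mu ⟨0, hq⟩ := by
            refine hmu ?_
            rw [Fin.le_def]
            simp
      _ ≤ lam ⟨0, hp⟩ := le_of_lt hgap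
      _ ≤ lam j := by
            refine hlam ?_
            rw [Fin.le_def]
            simp
    simp only [eps, if_neg hip]
    nlinarith

lemma cardT (hq : 0 < q) (j : Fin p) :
    (Finset.univ.filter (fun i : Fin (p+q) => (i:ℕ) < p - (j:ℕ) ∨ p ≤ (i:ℕ))).card
      = (p - (j:ℕ)) + q := by
  have hjp : (j:ℕ) < p := j.isLt
  have h1 : (Finset.univ.filter (fun i : Fin (p+q) => (i:ℕ) < p - (j:ℕ) ∨ p ≤ (i:ℕ)))
      = Finset.Iio (⟨p - (j:ℕ), by omega⟩ : Fin (p+q))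
        ∪ Finset.Ici (⟨p, by omega⟩ : Fin (p+q)) := by
    ext i
    simp [Finset.mem_filter, Finset.mem_union, Fin.lt_def, Fin.le_def]
  have hdisj : Disjoint (Finset.Iio (⟨p - (j:ℕ), by omega⟩ : Fin (p+q)))
      (Finset.Ici (⟨p, by omega⟩ : Fin (p+q))) := by
    rw [Finset.disjoint_left]
    intro i hi hic
    rw [Finset.mem_Iio, Fin.lt_def] at hi
    rw [Finset.mem_Ici, Fin.le_def] at hic
    have hi' : (i:ℕ) < p - (j:ℕ) := hi
    have hic' : p ≤ (i:ℕ) := hic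
    omega
  rw [h1, Finset.card_union_of_disjoint hdisj, Fin.card_Iio, Fin.card_Ici]
  show p - (j:ℕ) + (p + q - p) = p - (j:ℕ) + q
  omega

lemma block_bound (hp : 0 < p) (hq : 0 < q)
    (X : Matrix (Fin (p+q)) (Fin (p+q)) ℂ)
    (lam : Fin p → ℝ) (mu : Fin q → ℝ)
    (hlam : Monotone lam) (hmu : Antitone mu) (hgap : mu ⟨0, hq⟩ < lam ⟨0, hp⟩)
    (S : Matrix (Fin (p+q)) (Fin (p+q)) ℂ) (hS : IsUnit S)
    (hSJ : S * Jmat p q * Sᴴ = Jmat p q)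
    (hX : X = S * diagonal (diagEntries p q lam mu) * S⁻¹)
    {d : Fin p → ℝ} (hd : Monotone d)
    (hUD : UDiag (X.submatrix (Fin.castAdd q) (Fin.castAdd q)) d) :
    ∀ j : Fin p, lam j ≤ d j := by
  intro j
  classical
  have hjp : (j:ℕ) < p := j.isLt
  have hSJS := conj_J_of_J_unitary hS hSJ
  set T : Finset (Fin (p+q)) :=
    Finset.univ.filter (fun i => (i:ℕ) < p - (j:ℕ) ∨ p ≤ (i:ℕ)) with hT
  set W : Submodule ℂ (Fin (p+q) → ℂ) :=
    Submodule.map (Matrix.mulVecLin S) (coordSub T) with hW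
  set V : Submodule ℂ (Fin p → ℂ) := Submodule.comap (embedL p q) W with hV
  have hWrank : Module.finrank ℂ W = (p - (j:ℕ)) + q := by
    rw [hW, map_finrank_isUnit hS, coordSub_finrank, hT, cardT hq j]
  have hinjE := embedL_injective p q
  have hrange : Module.finrank ℂ (LinearMap.range (embedL p q)) = p := by
    rw [LinearMap.finrank_range_of_inj hinjE]
    simp [Module.finrank_fintype_fun_eq_card]
  have hVrank : p - (j:ℕ) ≤ Module.finrank ℂ V := by
    have hVmap : Module.finrank ℂ V
        = Module.finrank ℂ (Submodule.map (embedL p q) V) :=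
      (Submodule.equivMapOfInjective _ hinjE V).finrank_eq
    have hmapeq : Submodule.map (embedL p q) V
        = LinearMap.range (embedL p q) ⊓ W := by
      rw [hV, Submodule.map_comap_eq]
    have hsum := Submodule.finrank_sup_add_finrank_inf_eq
      (LinearMap.range (embedL p q)) W
    have hsup : Module.finrank ℂ
        ((LinearMap.range (embedL p q)) ⊔ W : Submodule ℂ (Fin (p+q) → ℂ)) ≤ p + q := by
      have := Submodule.finrank_le
        ((LinearMap.range (embedL p q)) ⊔ W : Submodule ℂ (Fin (p+q) → ℂ))
      simpa [Module.finrank_fintype_fun_eq_card] using this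
    rw [hWrank, hrange] at hsum
    rw [hVmap, hmapeq]
    omega
  have hq2 : ∀ y ∈ V, lam j * nsq y ≤ quad (X.submatrix (Fin.castAdd q) (Fin.castAdd q)) y := by
    intro y hy
    rw [hV, Submodule.mem_comap] at hy
    obtain ⟨c, hcmem, hcy⟩ := hy
    have hcy' : embedL p q y = S *ᵥ c := by rw [← hcy]; rfl
    have h1 : quad (X.submatrix (Fin.castAdd q) (Fin.castAdd q)) y
        = (star (embedL p q y) ⬝ᵥ (Jmat p q *ᵥ (X *ᵥ embedL p q y))).re := by
      rw [quad, dot_embed]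
    have h2 : nsq y = (star (embedL p q y) ⬝ᵥ (Jmat p q *ᵥ embedL p q y)).re := by
      rw [dot_embed_id, dot_self_eq, Complex.ofReal_re]
    rw [h1, h2, hcy', hX, dot_transport hS hSJS (diagonal (diagEntries p q lam mu)) c,
      dot_transport_id hSJS c]
    refine coord_bound hp hq lam mu hlam hmu hgap j c (fun i hi => ?_)
    refine coordSub_apply_eq_zero hcmem ?_
    rw [hT, Finset.mem_filter]
    intro hmem
    exact hi hmem.2
  exact cf_lower hUD hd (lam j) (p - (j:ℕ)) (by omega) (by omega) V hVrank hq2 j (by omega)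


lemma block_herm {X : Matrix (Fin (p+q)) (Fin (p+q)) ℂ}
    (hX : X * Jmat p q = Jmat p q * Xᴴ) :
    (X.submatrix (Fin.castAdd q) (Fin.castAdd q)).IsHermitian := by
  rw [Matrix.IsHermitian]
  ext i j
  have h := congrFun (congrFun hX (Fin.castAdd q i)) (Fin.castAdd q j)
  rw [Jmat, mul_diagonal, diagonal_mul] at h
  rw [if_pos (show ((Fin.castAdd q j : Fin (p+q)) : ℕ) < p from j.isLt),
    if_pos (show ((Fin.castAdd q i : Fin (p+q)) : ℕ) < p from i.isLt),
    mul_one, one_mul, conjTranspose_apply] at h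
  rw [conjTranspose_apply, submatrix_apply, submatrix_apply]
  exact h.symm

lemma udiag_rev_diag {N : ℕ} (f : Fin N → ℝ) :
    UDiag (diagonal (fun i => ((f (Fin.rev i) : ℝ) : ℂ))) f := by
  have base : UDiag (diagonal (fun i => ((f (Fin.rev i) : ℝ) : ℂ))) (f ∘ Fin.rev) := by
    refine ⟨1, by rw [conjTranspose_one, one_mul], ?_⟩
    rw [conjTranspose_one, one_mul, mul_one]
    rfl
  have h := udiag_perm base Fin.revPerm
  have hfun : ((f ∘ Fin.rev) ∘ ⇑(Fin.revPerm : Equiv.Perm (Fin N))) = f := by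
    funext i
    simp [Fin.rev_rev]
  rwa [hfun] at h

end PseudoHermitian

end LW

namespace LW

/-- Transfer of pseudo-hermitianity under `J`-unitary conjugation. -/
lemma conj_psh {p q : ℕ} {A U : Matrix (Fin (p+q)) (Fin (p+q)) ℂ}
    (hUu : IsUnit U) (hUJ : U * Jmat p q * Uᴴ = Jmat p q)
    (hApsh : A * Jmat p q = Jmat p q * Aᴴ) :
    (U⁻¹ * A * U) * Jmat p q = Jmat p q * (U⁻¹ * A * U)ᴴ := by
  have hUdet := (Matrix.isUnit_iff_isUnit_det U).mp hUu
  have hUiU : U⁻¹ * U = 1 := Matrix.nonsing_inv_mul U hUdet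
  have hUHu : IsUnit Uᴴ := by
    rw [Matrix.isUnit_iff_isUnit_det, Matrix.det_conjTranspose]
    exact hUdet.star
  have hUHdet := (Matrix.isUnit_iff_isUnit_det Uᴴ).mp hUHu
  have hUHmul : Uᴴ * (Uᴴ)⁻¹ = 1 := Matrix.mul_nonsing_inv _ hUHdet
  have hJU : U⁻¹ * Jmat p q = Jmat p q * Uᴴ := by
    calc U⁻¹ * Jmat p q = U⁻¹ * (U * Jmat p q * Uᴴ) := by rw [hUJ]
    _ = (U⁻¹ * U) * Jmat p q * Uᴴ := by noncomm_ring
    _ = Jmat p q * Uᴴ := by rw [hUiU, one_mul]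
  have hJUH : U * Jmat p q = Jmat p q * (Uᴴ)⁻¹ := by
    calc U * Jmat p q = U * Jmat p q * (Uᴴ * (Uᴴ)⁻¹) := by rw [hUHmul, mul_one]
    _ = (U * Jmat p q * Uᴴ) * (Uᴴ)⁻¹ := by noncomm_ring
    _ = Jmat p q * (Uᴴ)⁻¹ := by rw [hUJ]
  calc (U⁻¹ * A * U) * Jmat p q = U⁻¹ * A * (U * Jmat p q) := by noncomm_ring
  _ = U⁻¹ * A * (Jmat p q * (Uᴴ)⁻¹) := by rw [hJUH]
  _ = U⁻¹ * (A * Jmat p q) * (Uᴴ)⁻¹ := by noncomm_ring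
  _ = U⁻¹ * (Jmat p q * Aᴴ) * (Uᴴ)⁻¹ := by rw [hApsh]
  _ = (U⁻¹ * Jmat p q) * (Aᴴ * (Uᴴ)⁻¹) := by noncomm_ring
  _ = (Jmat p q * Uᴴ) * (Aᴴ * (Uᴴ)⁻¹) := by rw [hJU]
  _ = Jmat p q * (Uᴴ * Aᴴ * (Uᴴ)⁻¹) := by noncomm_ring
  _ = Jmat p q * (U⁻¹ * A * U)ᴴ := by
      rw [conjTranspose_mul, conjTranspose_mul, Matrix.conjTranspose_nonsing_inv]
      noncomm_ring

/-- The conjugated similarity data. -/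
lemma conj_dec {p q : ℕ} {A U UA : Matrix (Fin (p+q)) (Fin (p+q)) ℂ}
    (hUu : IsUnit U) (hUJ : U * Jmat p q * Uᴴ = Jmat p q)
    (hUAu : IsUnit UA) (hUAJ : UA * Jmat p q * UAᴴ = Jmat p q)
    (D : Matrix (Fin (p+q)) (Fin (p+q)) ℂ) (hAdec : A = UA * D * UA⁻¹) :
    IsUnit (U⁻¹ * UA) ∧ (U⁻¹ * UA) * Jmat p q * (U⁻¹ * UA)ᴴ = Jmat p q ∧
      U⁻¹ * A * U = (U⁻¹ * UA) * D * (U⁻¹ * UA)⁻¹ := by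
  have hUdet := (Matrix.isUnit_iff_isUnit_det U).mp hUu
  have hUinvu : IsUnit U⁻¹ := Matrix.isUnit_nonsing_inv_iff.mpr hUu
  have hUHu : IsUnit Uᴴ := by
    rw [Matrix.isUnit_iff_isUnit_det, Matrix.det_conjTranspose]
    exact hUdet.star
  have hUHdet := (Matrix.isUnit_iff_isUnit_det Uᴴ).mp hUHu
  have hUHmul : Uᴴ * (Uᴴ)⁻¹ = 1 := Matrix.mul_nonsing_inv _ hUHdet
  refine ⟨hUinvu.mul hUAu, ?_, ?_⟩
  · have hstep : U⁻¹ * Jmat p q * (Uᴴ)⁻¹ = Jmat p q := by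
      calc U⁻¹ * Jmat p q * (Uᴴ)⁻¹ = U⁻¹ * (U * Jmat p q * Uᴴ) * (Uᴴ)⁻¹ := by rw [hUJ]
      _ = (U⁻¹ * U) * Jmat p q * (Uᴴ * (Uᴴ)⁻¹) := by noncomm_ring
      _ = Jmat p q := by rw [Matrix.nonsing_inv_mul U hUdet, hUHmul, one_mul, mul_one]
    calc (U⁻¹ * UA) * Jmat p q * (U⁻¹ * UA)ᴴ
        = U⁻¹ * (UA * Jmat p q * UAᴴ) * (U⁻¹)ᴴ := by
          rw [conjTranspose_mul]
          noncomm_ring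
    _ = U⁻¹ * Jmat p q * (Uᴴ)⁻¹ := by rw [hUAJ, Matrix.conjTranspose_nonsing_inv]
    _ = Jmat p q := hstep
  · have hinv : (U⁻¹ * UA)⁻¹ = UA⁻¹ * U := by
      rw [Matrix.mul_inv_rev, Matrix.nonsing_inv_nonsing_inv U hUdet]
    rw [hinv, hAdec]
    noncomm_ring

theorem lidskii_wielandt_lambda_aux
    (p q : ℕ) (hp : 0 < p) (hq : 0 < q)
    (A B : Matrix (Fin (p + q)) (Fin (p + q)) ℂ)
    (lamA : Fin p → ℝ) (muA : Fin q → ℝ)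
    (lamB : Fin p → ℝ) (muB : Fin q → ℝ)
    (lamC : Fin p → ℝ) (muC : Fin q → ℝ)
    (hA : IsAdmissible p q hp hq A lamA muA)
    (hB : IsAdmissible p q hp hq B lamB muB)
    (hC : IsAdmissible p q hp hq (A + B) lamC muC)
    (m : ℕ) (hm : m ≤ p) (idx : Fin m → Fin p) (hidx : StrictMono idx) :
    ∑ k : Fin m, lamA (idx k) + ∑ k : Fin m, lamB (Fin.castLE hm k) ≤
      ∑ k : Fin m, lamC (idx k) := by
  classical
  obtain ⟨hApsh, hlamA, hmuA, hgapA, UA, hUAu, hUAJ, hAdec⟩ := hA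
  obtain ⟨hBpsh, hlamB, hmuB, hgapB, UB, hUBu, hUBJ, hBdec⟩ := hB
  obtain ⟨hCpsh, hlamC, hmuC, hgapC, U, hUu, hUJ, hCdec⟩ := hC
  have hUdet := (Matrix.isUnit_iff_isUnit_det U).mp hUu
  have hUiU : U⁻¹ * U = 1 := Matrix.nonsing_inv_mul U hUdet
  set A' := U⁻¹ * A * U with hA'
  set B' := U⁻¹ * B * U with hB'
  have hsum : A' + B' = diagonal (diagEntries p q lamC muC) := by
    have h1 : A' + B' = U⁻¹ * (A + B) * U := by rw [hA', hB']; noncomm_ring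
    rw [h1, hCdec]
    calc U⁻¹ * (U * diagonal (diagEntries p q lamC muC) * U⁻¹) * U
        = (U⁻¹ * U) * diagonal (diagEntries p q lamC muC) * (U⁻¹ * U) := by noncomm_ring
    _ = diagonal (diagEntries p q lamC muC) := by rw [hUiU, one_mul, mul_one]
  have hA'psh : A' * Jmat p q = Jmat p q * A'ᴴ := conj_psh hUu hUJ hApsh
  obtain ⟨hSAu, hSAJ, hA'dec⟩ := conj_dec hUu hUJ hUAu hUAJ _ hAdec
  obtain ⟨hSBu, hSBJ, hB'dec⟩ := conj_dec hUu hUJ hUBu hUBJ _ hBdec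
  set MA := A'.submatrix (Fin.castAdd q) (Fin.castAdd q) with hMA
  set MB := B'.submatrix (Fin.castAdd q) (Fin.castAdd q) with hMB
  have hLblock : (diagonal (diagEntries p q lamC muC)).submatrix
        (Fin.castAdd q) (Fin.castAdd q)
      = diagonal (fun i : Fin p => ((lamC (Fin.rev i) : ℝ) : ℂ)) := by
    have harg : diagEntries p q lamC muC ∘ Fin.castAdd q
        = fun i : Fin p => ((lamC (Fin.rev i) : ℝ) : ℂ) := by
      funext i
      show diagEntries p q lamC muC (Fin.castAdd q i) = ((lamC (Fin.rev i) : ℝ) : ℂ)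
      rw [diagEntries, dif_pos (show ((Fin.castAdd q i : Fin (p+q)) : ℕ) < p from i.isLt)]
      congr 2
      apply Fin.ext
      rw [Fin.val_rev]
      show p - 1 - (i : ℕ) = p - ((i : ℕ) + 1)
      omega
    rw [Matrix.submatrix_diagonal _ _ (Fin.castAdd_injective p q), harg]
  have hMAB : MA + MB = diagonal (fun i : Fin p => ((lamC (Fin.rev i) : ℝ) : ℂ)) := by
    have h0 : MA + MB = (A' + B').submatrix (Fin.castAdd q) (Fin.castAdd q) := rfl
    rw [h0, hsum, hLblock]
  have hUDc : UDiag (MA + MB) lamC := by rw [hMAB]; exact udiag_rev_diag lamC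
  have hMAherm : MA.IsHermitian := block_herm hA'psh
  have hMBherm : MB.IsHermitian := by
    have h0 : MB = (MA + MB) - MA := by abel
    rw [h0, hMAB]
    exact Matrix.IsHermitian.sub (udiag_herm (udiag_rev_diag lamC)) hMAherm
  obtain ⟨a', ha'm, hUA'⟩ := exists_udiag_sorted hMAherm
  obtain ⟨b', hb'm, hUB'⟩ := exists_udiag_sorted hMBherm
  have hlid := herm_lidskii hUA' ha'm hUB' hb'm hUDc hlamC m hm idx hidx
  have hbndA : ∀ j, lamA j ≤ a' j :=
    block_bound hp hq A' lamA muA hlamA hmuA hgapA _ hSAu hSAJ hA'dec ha'm hUA'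
  have hbndB : ∀ j, lamB j ≤ b' j :=
    block_bound hp hq B' lamB muB hlamB hmuB hgapB _ hSBu hSBJ hB'dec hb'm hUB'
  have h1 : ∑ k : Fin m, lamA (idx k) ≤ ∑ k : Fin m, a' (idx k) :=
    Finset.sum_le_sum fun k _ => hbndA _
  have h2 : ∑ k : Fin m, lamB (Fin.castLE hm k) ≤ ∑ k : Fin m, b' (Fin.castLE hm k) :=
    Finset.sum_le_sum fun k _ => hbndB _
  linarith

end LW

/-- Lidskii–Wielandt analogue for λ's: if `A`, `B`, `C = A + B` are
admissible and `1 ≤ i_1 < ⋯ < i_m ≤ p` (encoded by a strictly monotone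
`idx : Fin m → Fin p`, 0-indexed), then
`Σ_k λ_{i_k}(C) ≥ Σ_k λ_{i_k}(A) + Σ_{k=1}^m λ_k(B)`. -/


theorem lidskii_wielandt_lambda
    (p q : ℕ) (hp : 0 < p) (hq : 0 < q)
    (A B : Matrix (Fin (p + q)) (Fin (p + q)) ℂ)
    (lamA : Fin p → ℝ) (muA : Fin q → ℝ)
    (lamB : Fin p → ℝ) (muB : Fin q → ℝ)
    (lamC : Fin p → ℝ) (muC : Fin q → ℝ)
    (hA : IsAdmissible p q hp hq A lamA muA)
    (hB : IsAdmissible p q hp hq B lamB muB)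
    (hC : IsAdmissible p q hp hq (A + B) lamC muC)
    (m : ℕ) (hm : m ≤ p) (idx : Fin m → Fin p) (hidx : StrictMono idx) :
    ∑ k : Fin m, lamA (idx k) + ∑ k : Fin m, lamB (Fin.castLE hm k) ≤
      ∑ k : Fin m, lamC (idx k) := by
  exact LW.lidskii_wielandt_lambda_aux p q hp hq A B lamA muA lamB muB lamC muC hA hB hC m hm idx hidx
end
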